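/- Let Q(θ) be a continuous (m+1)×(m+1) Hermitian matrix-valued function on the unit circle that is positive semidefinite for all θ, and suppose for every ε > 0 there exists a matrix polynomial P_ε(z) of degree at most n with Q(θ) + εI = P_ε(e^{iθ}) P_ε(e^{iθ})†. Then there exists a matrix polynomial P(z) of degree at most n with Q(θ) = P(e^{iθ}) P(e^{iθ})† for all θ. -/

import Mathlib

open Matrix Finset
open scoped ComplexOrder

noncomputable def fzeta (n : ℕ) : ℂ := Complex.exp (2 * Real.pi * Complex.I / ((n : ℂ) + 1))

lemma fzeta_prim (n : ℕ) : IsPrimitiveRoot (fzeta n) (n + 1) := by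
  have := Complex.isPrimitiveRoot_exp (n + 1) (Nat.succ_ne_zero n)
  rw [fzeta]; convert this using 3; push_cast; ring

lemma fzeta_conj_mul (n : ℕ) : (starRingEnd ℂ) (fzeta n) * fzeta n = 1 := by
  have : fzeta n = Complex.exp ((2 * Real.pi / (n + 1) : ℝ) * Complex.I) := by
    rw [fzeta]; congr 1; push_cast; ring
  rw [this, Complex.conj_mul']
  rw [Complex.norm_exp_ofReal_mul_I]
  norm_num

lemma fzeta_pow (n : ℕ) : fzeta n ^ (n + 1) = 1 := (fzeta_prim n).pow_eq_one

lemma fzeta_conj_pow (n : ℕ) : ((starRingEnd ℂ) (fzeta n)) ^ (n + 1) = 1 := by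
  rw [← map_pow, fzeta_pow, RingHom.map_one]

lemma dft_sum (n : ℕ) (l k : Fin (n + 1)) :
    ∑ t : Fin (n + 1), (starRingEnd ℂ) (fzeta n ^ ((t : ℕ) * (k : ℕ))) * fzeta n ^ ((t : ℕ) * (l : ℕ)) =
      if l = k then ((n : ℂ) + 1) else 0 := by
  have hterm : ∀ t : Fin (n + 1),
      (starRingEnd ℂ) (fzeta n ^ ((t : ℕ) * (k : ℕ))) * fzeta n ^ ((t : ℕ) * (l : ℕ)) =
        (fzeta n ^ (l : ℕ) * ((starRingEnd ℂ) (fzeta n)) ^ (k : ℕ)) ^ (t : ℕ) := by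
    intro t
    rw [map_pow, mul_pow, ← pow_mul, ← pow_mul]
    ring
  simp only [hterm]
  rcases eq_or_ne l k with h | h
  · subst h
    have : fzeta n ^ (l : ℕ) * ((starRingEnd ℂ) (fzeta n)) ^ (l : ℕ) = 1 := by
      rw [← mul_pow, mul_comm, fzeta_conj_mul, one_pow]
    simp [this]
  · have hrne : fzeta n ^ (l : ℕ) * ((starRingEnd ℂ) (fzeta n)) ^ (k : ℕ) ≠ 1 := by
      intro hr1
      apply h
      have h2 : fzeta n ^ (l : ℕ) = fzeta n ^ (k : ℕ) := by
        calc fzeta n ^ (l : ℕ)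
            = fzeta n ^ (l : ℕ) * ((starRingEnd ℂ) (fzeta n) * fzeta n) ^ (k : ℕ) := by
              rw [fzeta_conj_mul]; ring
          _ = (fzeta n ^ (l : ℕ) * ((starRingEnd ℂ) (fzeta n)) ^ (k : ℕ)) * fzeta n ^ (k : ℕ) := by
              rw [mul_pow]; ring
          _ = fzeta n ^ (k : ℕ) := by rw [hr1, one_mul]
      exact Fin.ext ((fzeta_prim n).pow_inj l.isLt k.isLt h2)
    have hrpow : (fzeta n ^ (l : ℕ) * ((starRingEnd ℂ) (fzeta n)) ^ (k : ℕ)) ^ (n + 1) = 1 := by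
      rw [mul_pow, ← pow_mul, ← pow_mul, mul_comm (l : ℕ), mul_comm (k : ℕ),
        pow_mul, pow_mul, fzeta_pow, fzeta_conj_pow, one_pow, one_pow, one_mul]
    rw [Fin.sum_univ_eq_sum_range
      (fun t => (fzeta n ^ (l : ℕ) * ((starRingEnd ℂ) (fzeta n)) ^ (k : ℕ)) ^ t),
      geom_sum_eq hrne, hrpow]
    simp [h]

lemma dft (n : ℕ) (c : Fin (n + 1) → ℂ) (k : Fin (n + 1)) :
    ((n : ℂ) + 1) * c k =
      ∑ t : Fin (n + 1), (starRingEnd ℂ) (fzeta n ^ ((t : ℕ) * (k : ℕ))) *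
        ∑ l : Fin (n + 1), fzeta n ^ ((t : ℕ) * (l : ℕ)) * c l := by
  have h1 : ∀ t : Fin (n + 1), (starRingEnd ℂ) (fzeta n ^ ((t : ℕ) * (k : ℕ))) *
        ∑ l : Fin (n + 1), fzeta n ^ ((t : ℕ) * (l : ℕ)) * c l
      = ∑ l : Fin (n + 1), ((starRingEnd ℂ) (fzeta n ^ ((t : ℕ) * (k : ℕ))) *
          fzeta n ^ ((t : ℕ) * (l : ℕ))) * c l := by
    intro t; rw [Finset.mul_sum]; exact Finset.sum_congr rfl fun l _ => by ring
  simp only [h1]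
  rw [Finset.sum_comm]
  have h2 : ∀ l : Fin (n + 1), ∑ t : Fin (n + 1),
      ((starRingEnd ℂ) (fzeta n ^ ((t : ℕ) * (k : ℕ))) * fzeta n ^ ((t : ℕ) * (l : ℕ))) * c l
      = (if l = k then ((n : ℂ) + 1) else 0) * c l := by
    intro l; rw [← Finset.sum_mul, dft_sum]
  simp only [h2]
  simp

lemma eval_pow (n : ℕ) (t l : Fin (n + 1)) :
    Complex.exp (((2 * Real.pi * t / (n + 1) : ℝ) : ℂ) * Complex.I) ^ (l : ℕ) =
      fzeta n ^ ((t : ℕ) * (l : ℕ)) := by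
  rw [fzeta, ← Complex.exp_nat_mul, ← Complex.exp_nat_mul]
  congr 1
  push_cast
  have hne : ((n : ℂ) + 1) ≠ 0 := by
    have := Nat.cast_add_one_ne_zero (R := ℂ) n
    simpa using this
  field_simp

-- main part

lemma fzeta_eq (n : ℕ) : fzeta n = Complex.exp (((2 * Real.pi / (n + 1) : ℝ) : ℂ) * Complex.I) := by
  rw [fzeta]; congr 1; push_cast; ring

lemma fzeta_abs (n : ℕ) : ‖fzeta n‖ = 1 := by
  rw [fzeta_eq, Complex.norm_exp_ofReal_mul_I]

lemma entry_eq (n m : ℕ) (P : Fin (n + 1) → Matrix (Fin (m + 1)) (Fin (m + 1)) ℂ) (e : ℂ)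
    (i j : Fin (m + 1)) :
    ((∑ k : Fin (n + 1), e ^ (k : ℕ) • P k) * (∑ k : Fin (n + 1), e ^ (k : ℕ) • P k)ᴴ) i j =
      ∑ l : Fin (m + 1), (∑ k : Fin (n + 1), e ^ (k : ℕ) * P k i l) *
        (starRingEnd ℂ) (∑ k : Fin (n + 1), e ^ (k : ℕ) * P k j l) := by
  simp [Matrix.mul_apply, Matrix.conjTranspose_apply, Matrix.sum_apply, Matrix.smul_apply,
    smul_eq_mul, map_sum, Complex.star_def]

lemma key_bound (n m : ℕ) (Q : ℝ → Matrix (Fin (m + 1)) (Fin (m + 1)) ℂ)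
    (ε : ℝ) (P : Fin (n + 1) → Matrix (Fin (m + 1)) (Fin (m + 1)) ℂ)
    (hP : ∀ θ : ℝ,
        Q θ + (ε : ℂ) • (1 : Matrix (Fin (m + 1)) (Fin (m + 1)) ℂ) =
          (∑ k : Fin (n + 1), Complex.exp (θ * Complex.I) ^ (k : ℕ) • P k) *
            (∑ k : Fin (n + 1), Complex.exp (θ * Complex.I) ^ (k : ℕ) • P k)ᴴ)
    (θ : ℝ) (i j : Fin (m + 1)) :
    Complex.normSq (∑ k : Fin (n + 1), Complex.exp (θ * Complex.I) ^ (k : ℕ) * P k i j) ≤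
      (Q θ i i).re + ε := by
  have h := congrFun (congrFun (hP θ) i) i
  rw [entry_eq] at h
  have hre := congrArg Complex.re h
  simp only [Matrix.add_apply, Matrix.smul_apply, Matrix.one_apply_eq, Complex.mul_conj,
    Complex.add_re, Complex.re_sum, Complex.ofReal_re, smul_eq_mul, mul_one] at hre
  have hb : Complex.normSq (∑ k : Fin (n + 1), Complex.exp (θ * Complex.I) ^ (k : ℕ) * P k i j)
      ≤ ∑ l : Fin (m + 1), Complex.normSq (∑ k : Fin (n + 1),
        Complex.exp (θ * Complex.I) ^ (k : ℕ) * P k i l) :=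
    Finset.single_le_sum (f := fun l => Complex.normSq (∑ k : Fin (n + 1),
      Complex.exp (θ * Complex.I) ^ (k : ℕ) * P k i l))
      (fun l _ => Complex.normSq_nonneg _) (Finset.mem_univ j)
  linarith

lemma fzeta_prim' (n : ℕ) : IsPrimitiveRoot (fzeta n) (n + 1) := by
  have := Complex.isPrimitiveRoot_exp (n + 1) (Nat.succ_ne_zero n)
  rw [fzeta]; convert this using 3; push_cast; ring

lemma coeff_bound (n m : ℕ) (P : Fin (n + 1) → Matrix (Fin (m + 1)) (Fin (m + 1)) ℂ) (C : ℝ)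
    (hval : ∀ (θ : ℝ) (i j : Fin (m + 1)),
      ‖∑ k : Fin (n + 1), Complex.exp (θ * Complex.I) ^ (k : ℕ) * P k i j‖ ≤ C)
    (k : Fin (n + 1)) (i j : Fin (m + 1)) : ‖P k i j‖ ≤ C := by
  have hdft := dft n (fun l => P l i j) k
  have hval' : ∀ t : Fin (n + 1),
      ∑ l : Fin (n + 1), fzeta n ^ ((t : ℕ) * (l : ℕ)) * P l i j =
        ∑ l : Fin (n + 1),
          Complex.exp (((2 * Real.pi * t / (n + 1) : ℝ) : ℂ) * Complex.I) ^ (l : ℕ) * P l i j :=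
    fun t => Finset.sum_congr rfl fun l _ => by rw [eval_pow]
  simp only [hval'] at hdft
  have h := congrArg norm hdft
  rw [norm_mul] at h
  have habs : ‖(n : ℂ) + 1‖ = (n : ℝ) + 1 := by
    rw [show ((n : ℂ) + 1) = ((n + 1 : ℕ) : ℂ) by push_cast; ring, Complex.norm_natCast]
    push_cast; ring
  have hsum : ‖∑ t : Fin (n + 1),
      (starRingEnd ℂ) (fzeta n ^ ((t : ℕ) * (k : ℕ))) *
        ∑ l : Fin (n + 1),
          Complex.exp (((2 * Real.pi * t / (n + 1) : ℝ) : ℂ) * Complex.I) ^ (l : ℕ) * P l i j‖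
      ≤ ((n : ℝ) + 1) * C := by
    refine le_trans (norm_sum_le _ _) ?_
    have : ∀ t : Fin (n + 1), ‖(starRingEnd ℂ) (fzeta n ^ ((t : ℕ) * (k : ℕ))) *
        ∑ l : Fin (n + 1),
          Complex.exp (((2 * Real.pi * t / (n + 1) : ℝ) : ℂ) * Complex.I) ^ (l : ℕ) * P l i j‖
        ≤ C := by
      intro t
      rw [norm_mul, Complex.norm_conj, norm_pow, fzeta_abs, one_pow, one_mul]
      exact hval (2 * Real.pi * t / (n + 1) : ℝ) i j
    refine le_trans (Finset.sum_le_sum fun t _ => this t) ?_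
    simp [Finset.card_univ]
  rw [habs] at h
  have hpos : (0 : ℝ) < (n : ℝ) + 1 := by positivity
  rw [← h] at hsum
  nlinarith [norm_nonneg (P k i j), hsum]

theorem stmt_9 (n m : ℕ) (Q : ℝ → Matrix (Fin (m + 1)) (Fin (m + 1)) ℂ)
    (hcont : Continuous Q)
    (hpsd : ∀ θ : ℝ, (Q θ).PosSemidef)
    (happrox : ∀ ε : ℝ, 0 < ε →
      ∃ P : Fin (n + 1) → Matrix (Fin (m + 1)) (Fin (m + 1)) ℂ, ∀ θ : ℝ,
        Q θ + (ε : ℂ) • (1 : Matrix (Fin (m + 1)) (Fin (m + 1)) ℂ) =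
          (∑ k : Fin (n + 1), Complex.exp (θ * Complex.I) ^ (k : ℕ) • P k) *
            (∑ k : Fin (n + 1), Complex.exp (θ * Complex.I) ^ (k : ℕ) • P k)ᴴ) :
    ∃ P : Fin (n + 1) → Matrix (Fin (m + 1)) (Fin (m + 1)) ℂ, ∀ θ : ℝ,
      Q θ = (∑ k : Fin (n + 1), Complex.exp (θ * Complex.I) ^ (k : ℕ) • P k) *
        (∑ k : Fin (n + 1), Complex.exp (θ * Complex.I) ^ (k : ℕ) • P k)ᴴ := by
  classical
  obtain ⟨P1, hP1⟩ := happrox 1 one_pos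
  set B : ℝ := ∑ i : Fin (m + 1), ∑ l : Fin (m + 1),
      (∑ k : Fin (n + 1), ‖P1 k i l‖) ^ 2 with hB
  have hBnn : 0 ≤ B :=
    Finset.sum_nonneg fun _ _ => Finset.sum_nonneg fun _ _ => sq_nonneg _
  have hQdiag : ∀ (θ : ℝ) (i : Fin (m + 1)), (Q θ i i).re ≤ B := by
    intro θ i
    have h := congrFun (congrFun (hP1 θ) i) i
    rw [entry_eq] at h
    have hre := congrArg Complex.re h
    simp only [Matrix.add_apply, Matrix.smul_apply, Matrix.one_apply_eq, Complex.mul_conj,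
      Complex.add_re, Complex.re_sum, Complex.ofReal_re, smul_eq_mul, mul_one,
      Complex.ofReal_one, Complex.one_re] at hre
    have hterm : ∀ l : Fin (m + 1),
        Complex.normSq (∑ k : Fin (n + 1), Complex.exp (θ * Complex.I) ^ (k : ℕ) * P1 k i l)
          ≤ (∑ k : Fin (n + 1), ‖P1 k i l‖) ^ 2 := by
      intro l
      rw [← Complex.sq_norm]
      have h1 : ‖∑ k : Fin (n + 1), Complex.exp (θ * Complex.I) ^ (k : ℕ) * P1 k i l‖
          ≤ ∑ k : Fin (n + 1), ‖P1 k i l‖ := by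
        refine le_trans (norm_sum_le _ _) (le_of_eq (Finset.sum_congr rfl fun k _ => ?_))
        rw [norm_mul, norm_pow, Complex.norm_exp_ofReal_mul_I, one_pow, one_mul]
      exact pow_le_pow_left₀ (norm_nonneg _) h1 2
    have hsum : ∑ l : Fin (m + 1),
        Complex.normSq (∑ k : Fin (n + 1), Complex.exp (θ * Complex.I) ^ (k : ℕ) * P1 k i l)
          ≤ ∑ l : Fin (m + 1), (∑ k : Fin (n + 1), ‖P1 k i l‖) ^ 2 :=
      Finset.sum_le_sum fun l _ => hterm l
    have hmem : ∑ l : Fin (m + 1), (∑ k : Fin (n + 1), ‖P1 k i l‖) ^ 2 ≤ B :=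
      Finset.single_le_sum
        (f := fun i => ∑ l : Fin (m + 1), (∑ k : Fin (n + 1), ‖P1 k i l‖) ^ 2)
        (fun _ _ => Finset.sum_nonneg fun _ _ => sq_nonneg _) (Finset.mem_univ i)
    linarith
  set C : ℝ := Real.sqrt (B + 1) with hC
  have hCnn : 0 ≤ C := Real.sqrt_nonneg _
  have hex : ∀ j : ℕ, ∃ P : Fin (n + 1) → Matrix (Fin (m + 1)) (Fin (m + 1)) ℂ, ∀ θ : ℝ,
      Q θ + ((1 / ((j : ℝ) + 1) : ℝ) : ℂ) • (1 : Matrix (Fin (m + 1)) (Fin (m + 1)) ℂ) =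
        (∑ k : Fin (n + 1), Complex.exp (θ * Complex.I) ^ (k : ℕ) • P k) *
          (∑ k : Fin (n + 1), Complex.exp (θ * Complex.I) ^ (k : ℕ) • P k)ᴴ :=
    fun j => happrox _ (by positivity)
  choose Ps hPs using hex
  have hval : ∀ (j : ℕ) (θ : ℝ) (i i' : Fin (m + 1)),
      ‖∑ k : Fin (n + 1), Complex.exp (θ * Complex.I) ^ (k : ℕ) * Ps j k i i'‖ ≤ C := by
    intro j θ i i'
    have h := key_bound n m Q _ _ (hPs j) θ i i'
    have hle1 : (1 / ((j : ℝ) + 1)) ≤ 1 := by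
      rw [div_le_one (by positivity)]
      linarith [Nat.cast_nonneg (α := ℝ) j]
    have h2 : Complex.normSq (∑ k : Fin (n + 1),
        Complex.exp (θ * Complex.I) ^ (k : ℕ) * Ps j k i i') ≤ B + 1 := by
      linarith [hQdiag θ i]
    rw [← Complex.sq_norm] at h2
    rw [hC]
    exact (Real.le_sqrt (norm_nonneg _) (by linarith)).mpr h2
  have hcoeff : ∀ (j : ℕ) (k : Fin (n + 1)) (i i' : Fin (m + 1)),
      ‖Ps j k i i'‖ ≤ C :=
    fun j k i i' => coeff_bound n m (Ps j) C (hval j) k i i'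
  set x : ℕ → (Fin (n + 1) → Fin (m + 1) → Fin (m + 1) → ℂ) :=
    fun j k a b => Ps j k a b with hx
  have hxball : ∀ j, x j ∈ Metric.closedBall (0 : Fin (n + 1) → Fin (m + 1) → Fin (m + 1) → ℂ) C := by
    intro j
    rw [Metric.mem_closedBall, dist_zero_right]
    rw [pi_norm_le_iff_of_nonneg hCnn]; intro k
    rw [pi_norm_le_iff_of_nonneg hCnn]; intro a
    rw [pi_norm_le_iff_of_nonneg hCnn]; intro b
    exact hcoeff j k a b
  obtain ⟨a, -, φ, hφ, hlim⟩ :=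
    tendsto_subseq_of_bounded Metric.isBounded_closedBall hxball
  refine ⟨fun k => Matrix.of fun i i' => a k i i', fun θ => ?_⟩
  ext i i'
  rw [entry_eq]
  set F : (Fin (n + 1) → Fin (m + 1) → Fin (m + 1) → ℂ) → ℂ := fun y =>
    ∑ l : Fin (m + 1), (∑ k : Fin (n + 1), Complex.exp (θ * Complex.I) ^ (k : ℕ) * y k i l) *
      (starRingEnd ℂ) (∑ k : Fin (n + 1), Complex.exp (θ * Complex.I) ^ (k : ℕ) * y k i' l)
    with hF
  have happ : ∀ (k : Fin (n + 1)) (r s : Fin (m + 1)),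
      Continuous fun y : Fin (n + 1) → Fin (m + 1) → Fin (m + 1) → ℂ => y k r s :=
    fun k r s => (continuous_apply s).comp ((continuous_apply r).comp (continuous_apply k))
  have hFc : Continuous F := by
    apply continuous_finset_sum
    intro l _
    refine Continuous.mul ?_ (Complex.continuous_conj.comp ?_) <;>
    · apply continuous_finset_sum
      intro k _
      exact continuous_const.mul (happ k _ l)
  have h1 : Filter.Tendsto (fun N => F (x (φ N))) Filter.atTop (nhds (F a)) :=
    (hFc.tendsto a).comp hlim
  have h2 : ∀ N, F (x (φ N)) =
      Q θ i i' + ((1 / ((φ N : ℝ) + 1) : ℝ) : ℂ) * (if i = i' then 1 else 0) := by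
    intro N
    have h := congrFun (congrFun ((hPs (φ N)) θ) i) i'
    rw [entry_eq] at h
    rw [hF]
    simp only [hx]
    rw [← h]
    simp [Matrix.add_apply, Matrix.smul_apply, Matrix.one_apply, smul_eq_mul]
  have h3 : Filter.Tendsto
      (fun N => Q θ i i' + ((1 / ((φ N : ℝ) + 1) : ℝ) : ℂ) * (if i = i' then 1 else 0))
      Filter.atTop (nhds (Q θ i i')) := by
    have hr : Filter.Tendsto (fun N : ℕ => (1 / ((φ N : ℝ) + 1))) Filter.atTop (nhds 0) :=
      tendsto_one_div_add_atTop_nhds_zero_nat.comp hφ.tendsto_atTop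
    have hc : Filter.Tendsto (fun N : ℕ => ((1 / ((φ N : ℝ) + 1) : ℝ) : ℂ))
        Filter.atTop (nhds 0) := by
      rw [show ((0 : ℂ)) = ((0 : ℝ) : ℂ) by norm_num]
      exact (Complex.continuous_ofReal.tendsto 0).comp hr
    have := (tendsto_const_nhds (x := Q θ i i') (f := Filter.atTop (α := ℕ))).add
      (hc.mul_const (if i = i' then 1 else 0))
    simpa using this
  have h1' : Filter.Tendsto
      (fun N => Q θ i i' + ((1 / ((φ N : ℝ) + 1) : ℝ) : ℂ) * (if i = i' then 1 else 0))
      Filter.atTop (nhds (F a)) := by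
    rw [← funext h2]
    exact h1
  exact (tendsto_nhds_unique h1' h3).symm
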